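/- Let μ be the measure on ℝ² given by μ = (1/2)·(Exp(1) ⊗ Exp(3)) + (1/2)·T, where Exp(λ) denotes the exponential distribution with rate λ (density λe^{−λx} on [0,∞)), Exp(1) ⊗ Exp(3) is the product measure, and T is the pushforward of Exp(2) under the map y ↦ (y, y). Then for every x¹, x² ∈ ℝ, as n → ∞, n·μ( (−∞, (log n)/2 + x¹] × ((log n)/2 + x², ∞) ) → (1/2)( e^{−2x²} − e^{−2x¹} ) if x² < x¹, and n·μ( (−∞, (log n)/2 + x¹] × ((log n)/2 + x², ∞) ) → 0 if x² ≥ x¹. -/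

import Mathlib

open MeasureTheory Filter Set
open scoped ENNReal

/-- The exponential distribution with rate `r`: density `r * exp (-(r * x))` on `[0, ∞)`. -/
noncomputable def expMeas (r : ℝ) : Measure ℝ :=
  volume.withDensity fun x => ENNReal.ofReal (if 0 ≤ x then r * Real.exp (-(r * x)) else 0)

lemma expMeas_eq (r : ℝ) : expMeas r = ProbabilityTheory.expMeasure r := by
  rw [ProbabilityTheory.expMeasure, ProbabilityTheory.gammaMeasure, expMeas]
  congr 1
  funext x
  rw [show ProbabilityTheory.gammaPDF 1 r x = ProbabilityTheory.exponentialPDF r x from rfl,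
    ProbabilityTheory.exponentialPDF_eq]

lemma expMeas_Iic {r : ℝ} (hr : 0 < r) {t : ℝ} (ht : 0 ≤ t) :
    expMeas r (Iic t) = ENNReal.ofReal (1 - Real.exp (-(r * t))) := by
  rw [expMeas_eq, ProbabilityTheory.expMeasure, ProbabilityTheory.gammaMeasure,
    withDensity_apply _ measurableSet_Iic]
  have h := ProbabilityTheory.lintegral_exponentialPDF_eq_antiDeriv hr t
  rw [show (ProbabilityTheory.gammaPDF 1 r) = (ProbabilityTheory.exponentialPDF r) from rfl, h,
    if_pos ht]

lemma expMeas_univ {r : ℝ} (hr : 0 < r) : expMeas r univ = 1 := by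
  rw [expMeas_eq]
  haveI := ProbabilityTheory.isProbabilityMeasure_expMeasure hr
  exact measure_univ

lemma exp_le_one_of {r t : ℝ} (hr : 0 < r) (ht : 0 ≤ t) : Real.exp (-(r * t)) ≤ 1 := by
  rw [Real.exp_le_one_iff]
  nlinarith

lemma isProbMeas_expMeas {r : ℝ} (hr : 0 < r) : IsProbabilityMeasure (expMeas r) := by
  rw [expMeas_eq]; exact ProbabilityTheory.isProbabilityMeasure_expMeasure hr

lemma expMeas_Ioi {r : ℝ} (hr : 0 < r) {t : ℝ} (ht : 0 ≤ t) :
    expMeas r (Ioi t) = ENNReal.ofReal (Real.exp (-(r * t))) := by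
  haveI := isProbMeas_expMeas hr
  have h : Ioi t = (Iic t)ᶜ := compl_Iic.symm
  rw [h, measure_compl measurableSet_Iic (measure_ne_top _ _), expMeas_univ hr,
    expMeas_Iic hr ht, ← ENNReal.ofReal_one,
    ← ENNReal.ofReal_sub _ (by nlinarith [exp_le_one_of hr ht])]
  norm_num

lemma expMeas_Ioc {r : ℝ} (hr : 0 < r) {b c : ℝ} (hb : 0 ≤ b) (hbc : b ≤ c) :
    expMeas r (Ioc b c) = ENNReal.ofReal (Real.exp (-(r * b)) - Real.exp (-(r * c))) := by
  haveI := isProbMeas_expMeas hr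
  have h : Ioc b c = Iic c \ Iic b := by
    ext y; simp [and_comm]
  rw [h, measure_diff (Iic_subset_Iic.mpr hbc) measurableSet_Iic.nullMeasurableSet
      (measure_ne_top _ _), expMeas_Iic hr (hb.trans hbc), expMeas_Iic hr hb,
    ← ENNReal.ofReal_sub _ (by nlinarith [exp_le_one_of hr hb])]
  ring_nf

/-- The mixture measure of Example 3.7:
`μ = (1/2)·(Exp(1) ⊗ Exp(3)) + (1/2)·(pushforward of Exp(2) under y ↦ (y,y))`. -/
noncomputable def mixMeas : Measure (ℝ × ℝ) :=
  (1/2 : ℝ≥0∞) • (expMeas 1).prod (expMeas 3) +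
    (1/2 : ℝ≥0∞) • (expMeas 2).map (fun y => (y, y))


lemma mixMeas_apply (c1 c2 : ℝ) :
    mixMeas (Iic c1 ×ˢ Ioi c2) =
      (1/2 : ℝ≥0∞) * (expMeas 1 (Iic c1) * expMeas 3 (Ioi c2)) +
        (1/2 : ℝ≥0∞) * expMeas 2 (Ioc c2 c1) := by
  haveI := isProbMeas_expMeas (r := 3) (by norm_num)
  haveI := isProbMeas_expMeas (r := 1) (by norm_num)
  have hm : Measurable fun y : ℝ => (y, y) := by fun_prop
  have hmeas : MeasurableSet (Iic c1 ×ˢ Ioi c2) := measurableSet_Iic.prod measurableSet_Ioi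
  have hpre : (fun y : ℝ => (y, y)) ⁻¹' (Iic c1 ×ˢ Ioi c2) = Ioc c2 c1 := by
    ext y; simp [and_comm]
  rw [mixMeas, Measure.add_apply, Measure.smul_apply, Measure.smul_apply,
    Measure.prod_prod, Measure.map_apply hm hmeas, hpre,
    smul_eq_mul, smul_eq_mul]

lemma half_ofReal : (1/2 : ℝ≥0∞) = ENNReal.ofReal (1/2) := by
  rw [ENNReal.ofReal_div_of_pos two_pos, ENNReal.ofReal_one, ENNReal.ofReal_ofNat]

lemma main_aux (x1 x2 C : ℝ)
    (hEq : ∀ᶠ n : ℕ in atTop,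
      (n : ℝ) * (mixMeas (Iic (Real.log n / 2 + x1) ×ˢ Ioi (Real.log n / 2 + x2))).toReal
        = (1/2) * (1 - Real.exp (-(Real.log n / 2 + x1))) *
            Real.exp (-(Real.log n / 2 + 3*x2)) + C) :
    Tendsto (fun n : ℕ =>
        (n : ℝ) * (mixMeas (Iic (Real.log n / 2 + x1) ×ˢ Ioi (Real.log n / 2 + x2))).toReal)
      atTop (nhds C) := by
  have hlog : Tendsto (fun n : ℕ => Real.log n) atTop atTop :=
    Real.tendsto_log_atTop.comp tendsto_natCast_atTop_atTop
  have hh : ∀ a : ℝ, Tendsto (fun n : ℕ => Real.exp (-(Real.log n / 2 + a))) atTop (nhds 0) := by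
    intro a
    have h2 : Tendsto (fun n : ℕ => Real.log n / 2 + a) atTop atTop :=
      tendsto_atTop_add_const_right _ a (hlog.atTop_div_const two_pos)
    exact Real.tendsto_exp_atBot.comp (tendsto_neg_atTop_atBot.comp h2)
  have hG : Tendsto (fun n : ℕ =>
      (1/2) * (1 - Real.exp (-(Real.log n / 2 + x1))) *
        Real.exp (-(Real.log n / 2 + 3*x2)) + C) atTop (nhds ((1/2) * (1-0) * 0 + C)) :=
    (((tendsto_const_nhds.sub (hh x1)).const_mul _).mul (hh (3*x2))).add tendsto_const_nhds
  have h0 : (1/2:ℝ)*(1-0)*0 + C = C := by ring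
  rw [h0] at hG
  exact hG.congr' (by filter_upwards [hEq] with n h using h.symm)

lemma eventual_setup (x1 x2 : ℝ) :
    ∀ᶠ n : ℕ in atTop, (1 : ℝ) ≤ (n : ℝ) ∧ 0 ≤ Real.log n / 2 + x1 ∧ 0 ≤ Real.log n / 2 + x2 := by
  have hlog : Tendsto (fun n : ℕ => Real.log n) atTop atTop :=
    Real.tendsto_log_atTop.comp tendsto_natCast_atTop_atTop
  filter_upwards [hlog.eventually_ge_atTop (max (-2*x1) (-2*x2)),
    eventually_ge_atTop 1] with n h1 h2
  have hx1 := le_trans (le_max_left _ _) h1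
  have hx2 := le_trans (le_max_right _ _) h1
  refine ⟨by exact_mod_cast h2, by linarith, by linarith⟩

theorem mixture_exp_hda_medium_cone_lower_upper' :
    ∀ x1 x2 : ℝ,
      (x2 < x1 →
        Tendsto (fun n : ℕ =>
            (n : ℝ) * (mixMeas
              (Iic (Real.log n / 2 + x1) ×ˢ Ioi (Real.log n / 2 + x2))).toReal)
          atTop (nhds ((1/2) * (Real.exp (-(2 * x2)) - Real.exp (-(2 * x1)))))) ∧
      (x1 ≤ x2 →
        Tendsto (fun n : ℕ =>
            (n : ℝ) * (mixMeas
              (Iic (Real.log n / 2 + x1) ×ˢ Ioi (Real.log n / 2 + x2))).toReal)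
          atTop (nhds 0)) := by
  intro x1 x2
  constructor
  · intro hlt
    apply main_aux
    filter_upwards [eventual_setup x1 x2] with n ⟨hn1, hc1, hc2⟩
    set L := Real.log n with hL
    have hc12 : L/2 + x2 ≤ L/2 + x1 := by linarith
    have hexp1 : Real.exp (-(1 * (L/2 + x1))) ≤ 1 := exp_le_one_of one_pos hc1
    have hexpm : Real.exp (-(2 * (L/2 + x1))) ≤ Real.exp (-(2 * (L/2 + x2))) := by
      apply Real.exp_le_exp.mpr; linarith
    rw [mixMeas_apply, expMeas_Iic one_pos hc1, expMeas_Ioi (by norm_num : (0:ℝ) < 3) hc2,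
      expMeas_Ioc (by norm_num : (0:ℝ) < 2) hc2 hc12,
      ← ENNReal.ofReal_mul (by linarith), half_ofReal,
      ← ENNReal.ofReal_mul (by norm_num), ← ENNReal.ofReal_mul (by norm_num),
      ← ENNReal.ofReal_add (by nlinarith [Real.exp_nonneg (-(3 * (L/2 + x2)))]) (by nlinarith),
      ENNReal.toReal_ofReal (by nlinarith [Real.exp_nonneg (-(3 * (L/2 + x2)))])]
    have hn : (n : ℝ) = Real.exp L := (Real.exp_log (by linarith)).symm
    rw [hn]
    have hA : Real.exp L * Real.exp (-(3*(L/2+x2))) = Real.exp (-(L/2+3*x2)) := by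
      rw [← Real.exp_add]; congr 1; ring
    have hB : Real.exp L * Real.exp (-(2*(L/2+x2))) = Real.exp (-(2*x2)) := by
      rw [← Real.exp_add]; congr 1; ring
    have hC : Real.exp L * Real.exp (-(2*(L/2+x1))) = Real.exp (-(2*x1)) := by
      rw [← Real.exp_add]; congr 1; ring
    rw [one_mul]
    linear_combination (1/2) * (1 - Real.exp (-(L/2+x1))) * hA + (1/2) * hB - (1/2) * hC
  · intro hle
    have h := main_aux x1 x2 0 ?_
    · simpa using h
    filter_upwards [eventual_setup x1 x2] with n ⟨hn1, hc1, hc2⟩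
    set L := Real.log n with hL
    have hempty : Ioc (L/2 + x2) (L/2 + x1) = ∅ := Ioc_eq_empty (by intro h; linarith)
    have hexp1 : Real.exp (-(1 * (L/2 + x1))) ≤ 1 := exp_le_one_of one_pos hc1
    rw [mixMeas_apply, expMeas_Iic one_pos hc1, expMeas_Ioi (by norm_num : (0:ℝ) < 3) hc2,
      hempty, measure_empty, mul_zero, add_zero,
      ← ENNReal.ofReal_mul (by linarith), half_ofReal,
      ← ENNReal.ofReal_mul (by norm_num),
      ENNReal.toReal_ofReal (by nlinarith [Real.exp_nonneg (-(3 * (L/2 + x2)))])]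
    have hn : (n : ℝ) = Real.exp L := (Real.exp_log (by linarith)).symm
    rw [hn]
    have hA : Real.exp L * Real.exp (-(3*(L/2+x2))) = Real.exp (-(L/2+3*x2)) := by
      rw [← Real.exp_add]; congr 1; ring
    rw [one_mul]
    linear_combination (1/2) * (1 - Real.exp (-(L/2+x1))) * hA

theorem mixture_exp_hda_medium_cone_lower_upper :
    ∀ x1 x2 : ℝ,
      (x2 < x1 →
        Tendsto (fun n : ℕ =>
            (n : ℝ) * (mixMeas
              (Iic (Real.log n / 2 + x1) ×ˢ Ioi (Real.log n / 2 + x2))).toReal)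
          atTop (nhds ((1/2) * (Real.exp (-(2 * x2)) - Real.exp (-(2 * x1)))))) ∧
      (x1 ≤ x2 →
        Tendsto (fun n : ℕ =>
            (n : ℝ) * (mixMeas
              (Iic (Real.log n / 2 + x1) ×ˢ Ioi (Real.log n / 2 + x2))).toReal)
          atTop (nhds 0)) :=
  mixture_exp_hda_medium_cone_lower_upper'
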